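/- Compatibility of fairness and stability under a proto-metric with strictly individually fair hospital preferences: let D (doctors) and H (hospitals) be finite sets with |D| = |H| = n ≥ 1, let D be partitioned into clusters, let each doctor i have a strict linear order ≻_i on H, and let each hospital h have a strict linear order ≻_h on the set of clusters. Then for every τ > 0 there exists a probabilistic allocation π that is PIIF with respect to the proto-metric and τ-contract stable. -/

import Mathlib

open Finset

/-- A probabilistic allocation: a finitely supported probability distribution over
matchings (bijections between doctors `D` and hospitals `H`). -/
def IsAlloc {D H : Type*} [Fintype D] [Fintype H] [DecidableEq D] [DecidableEq H]
    (π : (D ≃ H) → ℝ) : Prop :=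
  (∀ m, 0 ≤ π m) ∧ (∑ m : D ≃ H, π m) = 1

/-- The prospect of doctor `i` under the allocation `π`: the probability that `i`
is matched to hospital `h`. -/
def prospect {D H : Type*} [Fintype D] [Fintype H] [DecidableEq D] [DecidableEq H]
    (π : (D ≃ H) → ℝ) (i : D) (h : H) : ℝ :=
  ∑ m : D ≃ H, if m i = h then π m else 0

/-- `p` is a probability distribution on `H`. -/
def IsDist {H : Type*} [Fintype H] (p : H → ℝ) : Prop :=
  (∀ h, 0 ≤ p h) ∧ (∑ h : H, p h) = 1

/-- Total variation distance between two distributions on `H`. -/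
noncomputable def TV {H : Type*} [Fintype H] (p q : H → ℝ) : ℝ :=
  (1 / 2) * ∑ h : H, |p h - q h|

/-- `p` stochastically dominates `q` with respect to the strict preference relation
`pref` (where `pref x y` means `x` is strictly preferred to `y`): for every `h`, the
probability of an outcome at least as good as `h` under `p` is at least that under `q`. -/
def SDom {H : Type*} [Fintype H] (pref : H → H → Prop) (p q : H → ℝ) : Prop :=
  ∀ h : H,
    (∑ h' : H, Set.indicator {x : H | pref x h ∨ x = h} q h') ≤
      ∑ h' : H, Set.indicator {x : H | pref x h ∨ x = h} p h'

/-- Preference-informed individual fairness with respect to a (pseudo)metric `d`,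
total variation distance, and the doctors' strict preferences `pref`. -/
def PIIF {D H : Type*} [Fintype D] [Fintype H] [DecidableEq D] [DecidableEq H]
    (d : D → D → ℝ) (pref : D → H → H → Prop) (π : (D ≃ H) → ℝ) : Prop :=
  ∀ i j : D, ∃ p : H → ℝ,
    IsDist p ∧ TV p (prospect π j) ≤ d i j ∧ SDom (pref i) (prospect π i) p

/-- PIIF with respect to the proto-metric induced by the cluster map `c`: the prospect
of every doctor stochastically dominates the prospect of every doctor in its cluster. -/
def ClusterPIIF {D H K : Type*} [Fintype D] [Fintype H] [DecidableEq D] [DecidableEq H]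
    (c : D → K) (pref : D → H → H → Prop) (π : (D ≃ H) → ℝ) : Prop :=
  ∀ i j : D, c i = c j → SDom (pref i) (prospect π i) (prospect π j)


set_option linter.unusedSectionVars false
set_option maxHeartbeats 1600000

open Finset

namespace FSAE

open scoped Classical

variable {D H K : Type*} [Fintype D] [Fintype H] [Fintype K]
  [DecidableEq D] [DecidableEq H] [DecidableEq K]

variable (c : D → K) (rd : D → H → ℕ)

/-- support of a capacity vector -/
noncomputable def supp (A : H → ℝ) : Finset H := univ.filter (fun h => 0 < A h)

lemma mem_supp {A : H → ℝ} {h : H} : h ∈ supp A ↔ 0 < A h := by simp [supp]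

/-- best (minimum rank) hospital of doctor `i` within `s` -/
noncomputable def bst [Nonempty H] (s : Finset H) (i : D) : H :=
  if hs : s.Nonempty then (s.exists_min_image (rd i) hs).choose else Classical.arbitrary H

variable [Nonempty H]

lemma bst_mem {s : Finset H} (hs : s.Nonempty) (i : D) : bst rd s i ∈ s := by
  rw [bst, dif_pos hs]
  exact (s.exists_min_image (rd i) hs).choose_spec.1

lemma bst_min {s : Finset H} {h : H} (hh : h ∈ s) (i : D) :
    rd i (bst rd s i) ≤ rd i h := by
  have hs : s.Nonempty := ⟨h, hh⟩
  rw [bst, dif_pos hs]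
  exact (s.exists_min_image (rd i) hs).choose_spec.2 h hh

/-- number of doctors of cluster `k` currently eating `h` -/
noncomputable def nr (s : Finset H) (k : K) (h : H) : ℕ :=
  (univ.filter (fun i => c i = k ∧ bst rd s i = h)).card

/-- the set of hospitals being eaten -/
noncomputable def ded (A : H → ℝ) (k : K) : Finset H :=
  (supp A).filter (fun h => 0 < nr c rd (supp A) k h)

/-- step duration -/
noncomputable def Tstep (A : H → ℝ) (μ : ℝ) (k : K) : ℝ :=
  if hne : (ded c rd A k).Nonempty then
    min μ (((ded c rd A k).image
      (fun h => A h / (nr c rd (supp A) k h : ℝ))).min' (hne.image _))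
  else μ

/-- capacities after one step -/
noncomputable def Anext (A : H → ℝ) (μ : ℝ) (k : K) : H → ℝ :=
  fun h => A h - Tstep c rd A μ k * (nr c rd (supp A) k h : ℝ)

/-- the eating (probabilistic serial) recursion; returns (consumptions, leftover) -/
noncomputable def PSrec (k : K) : ℕ → (H → ℝ) → ℝ → ((D → H → ℝ) × (H → ℝ))
  | 0, A, _ => (0, A)
  | (n+1), A, μ =>
    if 0 < μ ∧ (ded c rd A k).Nonempty then
      let rest := PSrec k n (Anext c rd A μ k) (μ - Tstep c rd A μ k)
      (fun i h => (if c i = k ∧ h = bst rd (supp A) i then Tstep c rd A μ k else 0)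
          + rest.1 i h,
        rest.2)
    else (0, A)

lemma PSrec_zero (k : K) (A : H → ℝ) (μ : ℝ) : PSrec c rd k 0 A μ = (0, A) := rfl

lemma PSrec_neg {k : K} {A : H → ℝ} {μ : ℝ} (n : ℕ)
    (hg : ¬ (0 < μ ∧ (ded c rd A k).Nonempty)) :
    PSrec c rd k (n+1) A μ = (0, A) := by
  rw [PSrec, if_neg hg]

lemma PSrec_pos {k : K} {A : H → ℝ} {μ : ℝ} (n : ℕ)
    (hg : 0 < μ ∧ (ded c rd A k).Nonempty) :
    PSrec c rd k (n+1) A μ =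
      (fun i h => (if c i = k ∧ h = bst rd (supp A) i then Tstep c rd A μ k else 0)
          + (PSrec c rd k n (Anext c rd A μ k) (μ - Tstep c rd A μ k)).1 i h,
        (PSrec c rd k n (Anext c rd A μ k) (μ - Tstep c rd A μ k)).2) := by
  rw [PSrec, if_pos hg]

lemma Tstep_le {A : H → ℝ} {μ : ℝ} {k : K} : Tstep c rd A μ k ≤ μ := by
  rw [Tstep]; split
  · exact min_le_left _ _
  · exact le_refl _

lemma Tstep_min'_mem {A : H → ℝ} {k : K} (hne : (ded c rd A k).Nonempty) :
    ∃ h ∈ ded c rd A k,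
      ((ded c rd A k).image (fun h => A h / (nr c rd (supp A) k h : ℝ))).min'
        (hne.image _) = A h / (nr c rd (supp A) k h : ℝ) := by
  have := ((ded c rd A k).image (fun h => A h / (nr c rd (supp A) k h : ℝ))).min'_mem
    (hne.image _)
  rcases Finset.mem_image.1 this with ⟨h, hh, hv⟩
  exact ⟨h, hh, hv.symm⟩

lemma Tstep_pos {A : H → ℝ} {μ : ℝ} {k : K} (hμ : 0 < μ)
    (hne : (ded c rd A k).Nonempty) : 0 < Tstep c rd A μ k := by
  obtain ⟨h, hh, hv⟩ := Tstep_min'_mem c rd hne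
  rw [Tstep, dif_pos hne, hv]
  refine lt_min hμ ?_
  rcases Finset.mem_filter.1 hh with ⟨hsupp, hnr⟩
  have h1 : 0 < A h := mem_supp.1 hsupp
  have h2 : (0:ℝ) < (nr c rd (supp A) k h : ℝ) := by exact_mod_cast hnr
  positivity

lemma Tstep_le_death {A : H → ℝ} {μ : ℝ} {k : K} {h : H} (hh : h ∈ ded c rd A k) :
    Tstep c rd A μ k ≤ A h / (nr c rd (supp A) k h : ℝ) := by
  have hne : (ded c rd A k).Nonempty := ⟨h, hh⟩
  rw [Tstep, dif_pos hne]
  exact le_trans (min_le_right _ _) (Finset.min'_le _ _ (Finset.mem_image_of_mem _ hh))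

lemma nr_pos_mem {s : Finset H} {k : K} {h : H} (hs : s.Nonempty)
    (hnr : 0 < nr c rd s k h) : h ∈ s := by
  rw [nr, Finset.card_pos] at hnr
  obtain ⟨i, hi⟩ := hnr
  rcases Finset.mem_filter.1 hi with ⟨-, -, hb⟩
  exact hb ▸ bst_mem rd hs i

lemma supp_nonempty_of_ded {A : H → ℝ} {k : K} (hne : (ded c rd A k).Nonempty) :
    (supp A).Nonempty := by
  obtain ⟨x, hx⟩ := hne
  exact ⟨x, (Finset.mem_filter.1 hx).1⟩

lemma Anext_nonneg {A : H → ℝ} {μ : ℝ} {k : K} (hA : ∀ h, 0 ≤ A h) (hμ : 0 < μ)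
    (hne : (ded c rd A k).Nonempty) (h : H) : 0 ≤ Anext c rd A μ k h := by
  rw [Anext]
  rcases Nat.eq_zero_or_pos (nr c rd (supp A) k h) with h0 | hpos
  · rw [h0]; simpa using hA h
  · have hmem : h ∈ supp A := nr_pos_mem c rd (supp_nonempty_of_ded c rd hne) hpos
    have hd : h ∈ ded c rd A k := Finset.mem_filter.2 ⟨hmem, hpos⟩
    have hle := Tstep_le_death c rd (μ := μ) hd
    have hn : (0:ℝ) < (nr c rd (supp A) k h : ℝ) := by exact_mod_cast hpos
    rw [le_div_iff₀ hn] at hle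
    linarith

lemma Anext_le {A : H → ℝ} {μ : ℝ} {k : K} (hμ : 0 < μ)
    (hne : (ded c rd A k).Nonempty) (h : H) : Anext c rd A μ k h ≤ A h := by
  rw [Anext]
  have hT : 0 < Tstep c rd A μ k := Tstep_pos c rd hμ hne
  have hn : (0:ℝ) ≤ (nr c rd (supp A) k h : ℝ) := Nat.cast_nonneg _
  nlinarith

lemma supp_Anext_subset {A : H → ℝ} {μ : ℝ} {k : K} (hμ : 0 < μ)
    (hne : (ded c rd A k).Nonempty) : supp (Anext c rd A μ k) ⊆ supp A := by
  intro h hh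
  rw [mem_supp] at hh ⊢
  exact lt_of_lt_of_le hh (Anext_le c rd hμ hne h)

lemma death {A : H → ℝ} {μ : ℝ} {k : K} (hμ : 0 < μ)
    (hne : (ded c rd A k).Nonempty) (hT : Tstep c rd A μ k < μ) :
    (supp (Anext c rd A μ k)).card < (supp A).card := by
  obtain ⟨h, hh, hv⟩ := Tstep_min'_mem c rd hne
  have hTv : Tstep c rd A μ k = A h / (nr c rd (supp A) k h : ℝ) := by
    rw [Tstep, dif_pos hne] at hT ⊢
    rcases min_cases μ (((ded c rd A k).image
      (fun h => A h / (nr c rd (supp A) k h : ℝ))).min' (hne.image _)) with ⟨he, _⟩ | ⟨he, _⟩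
    · exact absurd (he ▸ hT) (lt_irrefl _)
    · rw [he, hv]
  rcases Finset.mem_filter.1 hh with ⟨hsupp, hnr⟩
  have hn : (nr c rd (supp A) k h : ℝ) ≠ 0 := by
    have : nr c rd (supp A) k h ≠ 0 := hnr.ne'
    exact_mod_cast this
  have hdead : Anext c rd A μ k h = 0 := by
    rw [Anext, hTv, div_mul_cancel₀ _ hn]; ring
  refine Finset.card_lt_card ⟨supp_Anext_subset c rd hμ hne, fun hsub => ?_⟩
  have := hsub hsupp
  rw [mem_supp, hdead] at this
  exact lt_irrefl _ this

lemma PSrec_mu_nonpos {k : K} {A : H → ℝ} {μ : ℝ} (hμ : μ ≤ 0) (n : ℕ) :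
    PSrec c rd k n A μ = (0, A) := by
  cases n with
  | zero => rfl
  | succ n => exact PSrec_neg c rd n (by rintro ⟨h1, -⟩; exact absurd h1 (not_lt.2 hμ))

/-- fuel irrelevance -/
lemma PSrec_fuel {k : K} {A : H → ℝ} {μ : ℝ} (hA : ∀ h, 0 ≤ A h) :
    ∀ n m : ℕ, (supp A).card < n → (supp A).card < m →
    PSrec c rd k n A μ = PSrec c rd k m A μ := by
  generalize hcard : (supp A).card = N
  induction N using Nat.strong_induction_on generalizing A μ with
  | _ N ih =>
    intro n m hn hm
    obtain ⟨n, rfl⟩ : ∃ n', n = n' + 1 := ⟨n - 1, by omega⟩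
    obtain ⟨m, rfl⟩ : ∃ m', m = m' + 1 := ⟨m - 1, by omega⟩
    by_cases hg : 0 < μ ∧ (ded c rd A k).Nonempty
    · rw [PSrec_pos c rd n hg, PSrec_pos c rd m hg]
      rcases lt_or_eq_of_le (Tstep_le c rd (A := A) (μ := μ) (k := k)) with hT | hT
      · have hd := death c rd hg.1 hg.2 hT
        rw [ih (supp (Anext c rd A μ k)).card (by omega)
          (Anext_nonneg c rd hA hg.1 hg.2) rfl n m (by omega) (by omega)]
      · have h0 : μ - Tstep c rd A μ k = 0 := by rw [hT]; ring
        rw [h0, PSrec_mu_nonpos c rd le_rfl, PSrec_mu_nonpos c rd le_rfl]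
    · rw [PSrec_neg c rd n hg, PSrec_neg c rd m hg]

/-- canonical eating function -/
noncomputable def EAT (k : K) (A : H → ℝ) (μ : ℝ) : (D → H → ℝ) × (H → ℝ) :=
  PSrec c rd k (Fintype.card H + 1) A μ

lemma supp_card_lt (A : H → ℝ) : (supp A).card < Fintype.card H + 1 :=
  Nat.lt_succ_of_le (Finset.card_le_univ _)

lemma EAT_neg {k : K} {A : H → ℝ} {μ : ℝ}
    (hg : ¬ (0 < μ ∧ (ded c rd A k).Nonempty)) : EAT c rd k A μ = (0, A) :=
  PSrec_neg c rd _ hg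

lemma EAT_pos {k : K} {A : H → ℝ} {μ : ℝ} (hA : ∀ h, 0 ≤ A h)
    (hg : 0 < μ ∧ (ded c rd A k).Nonempty) :
    EAT c rd k A μ =
      (fun i h => (if c i = k ∧ h = bst rd (supp A) i then Tstep c rd A μ k else 0)
          + (EAT c rd k (Anext c rd A μ k) (μ - Tstep c rd A μ k)).1 i h,
        (EAT c rd k (Anext c rd A μ k) (μ - Tstep c rd A μ k)).2) := by
  rw [EAT, PSrec_pos c rd _ hg]
  rcases lt_or_eq_of_le (Tstep_le c rd (A := A) (μ := μ) (k := k)) with hT | hT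
  · rw [EAT, PSrec_fuel c rd (Anext_nonneg c rd hA hg.1 hg.2) (Fintype.card H)
      (Fintype.card H + 1)
      (lt_of_lt_of_le (death c rd hg.1 hg.2 hT) (Finset.card_le_univ _))
      (supp_card_lt _)]
  · have h0 : μ - Tstep c rd A μ k = 0 := by rw [hT]; ring
    rw [h0, PSrec_mu_nonpos c rd le_rfl, EAT, PSrec_mu_nonpos c rd le_rfl]


section EATlemmas

variable {k : K}

lemma cluster_bite_sum {A : H → ℝ} {μ : ℝ} (h : H) :
    ∑ i ∈ univ.filter (fun i => c i = k),
      (if c i = k ∧ h = bst rd (supp A) i then Tstep c rd A μ k else 0)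
      = Tstep c rd A μ k * (nr c rd (supp A) k h : ℝ) := by
  rw [nr, ← Finset.sum_filter, Finset.filter_filter]
  have : (univ.filter (fun i => c i = k ∧ (c i = k ∧ h = bst rd (supp A) i)))
      = (univ.filter (fun i => c i = k ∧ bst rd (supp A) i = h)) := by
    apply Finset.filter_congr
    intro i _
    constructor
    · rintro ⟨h1, -, h2⟩; exact ⟨h1, h2.symm⟩
    · rintro ⟨h1, h2⟩; exact ⟨h1, h1, h2.symm⟩
  rw [this, Finset.sum_const, nsmul_eq_mul, mul_comm]

lemma EAT_nonneg {A : H → ℝ} {μ : ℝ} (hA : ∀ h, 0 ≤ A h) (hμ : 0 ≤ μ) :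
    (∀ i h, 0 ≤ (EAT c rd k A μ).1 i h) ∧
    (∀ h, 0 ≤ (EAT c rd k A μ).2 h ∧ (EAT c rd k A μ).2 h ≤ A h) := by
  generalize hcard : (supp A).card = N
  induction N using Nat.strong_induction_on generalizing A μ with
  | _ N ih =>
    by_cases hg : 0 < μ ∧ (ded c rd A k).Nonempty
    · rw [EAT_pos c rd hA hg]
      have hT : 0 < Tstep c rd A μ k := Tstep_pos c rd hg.1 hg.2
      have hA' := Anext_nonneg c rd hA hg.1 hg.2
      have hμ' : 0 ≤ μ - Tstep c rd A μ k := by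
        linarith [Tstep_le c rd (A := A) (μ := μ) (k := k)]
      have hrec : (∀ i h, 0 ≤ (EAT c rd k (Anext c rd A μ k) (μ - Tstep c rd A μ k)).1 i h) ∧
          (∀ h, 0 ≤ (EAT c rd k (Anext c rd A μ k) (μ - Tstep c rd A μ k)).2 h ∧
            (EAT c rd k (Anext c rd A μ k) (μ - Tstep c rd A μ k)).2 h
              ≤ Anext c rd A μ k h) := by
        rcases lt_or_eq_of_le (Tstep_le c rd (A := A) (μ := μ) (k := k)) with hlt | heq
        · exact ih _ (hcard ▸ death c rd hg.1 hg.2 hlt) hA' hμ' rfl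
        · have h0 : μ - Tstep c rd A μ k = 0 := by rw [heq]; ring
          rw [h0, EAT_neg c rd (by simp)]
          exact ⟨fun i h => le_rfl, fun h => ⟨hA' h, le_rfl⟩⟩
      refine ⟨fun i h => add_nonneg (by positivity) (hrec.1 i h), fun h => ?_⟩
      exact ⟨(hrec.2 h).1, le_trans (hrec.2 h).2 (Anext_le c rd hg.1 hg.2 h)⟩
    · rw [EAT_neg c rd hg]
      exact ⟨fun i h => le_rfl, fun h => ⟨hA h, le_rfl⟩⟩

lemma EAT_end_zero_of_zero {A : H → ℝ} {μ : ℝ} (hA : ∀ h, 0 ≤ A h) (hμ : 0 ≤ μ)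
    {h : H} (h0 : A h = 0) : (EAT c rd k A μ).2 h = 0 :=
  le_antisymm (h0 ▸ ((EAT_nonneg c rd hA hμ).2 h).2) ((EAT_nonneg c rd hA hμ).2 h).1

lemma EAT_offcluster {A : H → ℝ} {μ : ℝ} {i : D} (hik : c i ≠ k) (h : H) :
    (EAT c rd k A μ).1 i h = 0 := by
  suffices hs : ∀ n A μ, (PSrec c rd k n A μ).1 i h = 0 by exact hs _ _ _
  intro n
  induction n with
  | zero => intro A μ; rfl
  | succ n ihn =>
    intro A μ
    by_cases hg : 0 < μ ∧ (ded c rd A k).Nonempty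
    · rw [PSrec_pos c rd n hg]
      simp only [hik, false_and, if_false]
      simpa using ihn _ _
    · rw [PSrec_neg c rd n hg]; rfl

/-- column accounting: cluster members eat exactly `A - end` of each hospital -/
lemma EAT_col {A : H → ℝ} {μ : ℝ} (hA : ∀ h, 0 ≤ A h) (hμ : 0 ≤ μ) (h : H) :
    ∑ i ∈ univ.filter (fun i => c i = k), (EAT c rd k A μ).1 i h
      = A h - (EAT c rd k A μ).2 h := by
  generalize hcard : (supp A).card = N
  induction N using Nat.strong_induction_on generalizing A μ with
  | _ N ih =>
    by_cases hg : 0 < μ ∧ (ded c rd A k).Nonempty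
    · rw [EAT_pos c rd hA hg]
      simp only [Finset.sum_add_distrib]
      rw [cluster_bite_sum c rd h]
      have hA' := Anext_nonneg c rd hA hg.1 hg.2
      have hμ' : 0 ≤ μ - Tstep c rd A μ k := by
        linarith [Tstep_le c rd (A := A) (μ := μ) (k := k)]
      have key : ∑ i ∈ univ.filter (fun i => c i = k),
          (EAT c rd k (Anext c rd A μ k) (μ - Tstep c rd A μ k)).1 i h
          = Anext c rd A μ k h
            - (EAT c rd k (Anext c rd A μ k) (μ - Tstep c rd A μ k)).2 h := by
        rcases lt_or_eq_of_le (Tstep_le c rd (A := A) (μ := μ) (k := k)) with hlt | heq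
        · exact ih _ (hcard ▸ death c rd hg.1 hg.2 hlt) hA' hμ' rfl
        · have h0 : μ - Tstep c rd A μ k = 0 := by rw [heq]; ring
          rw [h0, EAT_neg c rd (by simp)]
          simp
      rw [key, Anext]
      ring
    · rw [EAT_neg c rd hg]
      simp

/-- a cluster member's bites in a positive step sum to the step length -/
lemma bite_row {A : H → ℝ} {μ : ℝ} {i : D} (hik : c i = k) :
    ∑ h, (if c i = k ∧ h = bst rd (supp A) i then Tstep c rd A μ k else 0)
      = Tstep c rd A μ k := by
  simp only [hik, true_and]
  rw [Finset.sum_ite_eq' univ (bst rd (supp A) i) (fun _ => Tstep c rd A μ k)]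
  simp

/-- row bound -/
lemma EAT_row_le {A : H → ℝ} {μ : ℝ} (hA : ∀ h, 0 ≤ A h) (hμ : 0 ≤ μ) (i : D) :
    ∑ h, (EAT c rd k A μ).1 i h ≤ μ := by
  generalize hcard : (supp A).card = N
  induction N using Nat.strong_induction_on generalizing A μ with
  | _ N ih =>
    by_cases hg : 0 < μ ∧ (ded c rd A k).Nonempty
    · rw [EAT_pos c rd hA hg]
      simp only [Finset.sum_add_distrib]
      have hA' := Anext_nonneg c rd hA hg.1 hg.2
      have hμ' : 0 ≤ μ - Tstep c rd A μ k := by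
        linarith [Tstep_le c rd (A := A) (μ := μ) (k := k)]
      have hbite : ∑ h, (if c i = k ∧ h = bst rd (supp A) i then Tstep c rd A μ k else 0)
          ≤ Tstep c rd A μ k := by
        by_cases hik : c i = k
        · rw [bite_row c rd hik]
        · simp only [hik, false_and, if_false]
          simp only [Finset.sum_const_zero]
          exact le_of_lt (Tstep_pos c rd hg.1 hg.2)
      have hrest : ∑ h, (EAT c rd k (Anext c rd A μ k) (μ - Tstep c rd A μ k)).1 i h
          ≤ μ - Tstep c rd A μ k := by
        rcases lt_or_eq_of_le (Tstep_le c rd (A := A) (μ := μ) (k := k)) with hlt | heq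
        · exact ih _ (hcard ▸ death c rd hg.1 hg.2 hlt) hA' hμ' rfl
        · have h0 : μ - Tstep c rd A μ k = 0 := by rw [heq]; ring
          rw [h0, EAT_neg c rd (by simp)]
          simp
      linarith
    · rw [EAT_neg c rd hg]
      simpa using hμ

lemma ded_nonempty_of_member {A : H → ℝ} {i : D} (hik : c i = k)
    (hs : (supp A).Nonempty) : (ded c rd A k).Nonempty := by
  refine ⟨bst rd (supp A) i, Finset.mem_filter.2 ⟨bst_mem rd hs i, ?_⟩⟩
  rw [nr, Finset.card_pos]
  exact ⟨i, Finset.mem_filter.2 ⟨Finset.mem_univ _, hik, rfl⟩⟩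

/-- dichotomy: either the doctor is fully fed or everything is eaten -/
lemma EAT_row_dichotomy {A : H → ℝ} {μ : ℝ} (hA : ∀ h, 0 ≤ A h) (hμ : 0 ≤ μ)
    {i : D} (hik : c i = k) :
    (∑ h, (EAT c rd k A μ).1 i h = μ) ∨ (∀ h, (EAT c rd k A μ).2 h = 0) := by
  generalize hcard : (supp A).card = N
  induction N using Nat.strong_induction_on generalizing A μ with
  | _ N ih =>
    by_cases hg : 0 < μ ∧ (ded c rd A k).Nonempty
    · rw [EAT_pos c rd hA hg]
      simp only [Finset.sum_add_distrib]
      rw [bite_row c rd hik]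
      have hA' := Anext_nonneg c rd hA hg.1 hg.2
      have hμ' : 0 ≤ μ - Tstep c rd A μ k := by
        linarith [Tstep_le c rd (A := A) (μ := μ) (k := k)]
      rcases lt_or_eq_of_le (Tstep_le c rd (A := A) (μ := μ) (k := k)) with hlt | heq
      · rcases ih _ (hcard ▸ death c rd hg.1 hg.2 hlt) hA' hμ' rfl with hfull | hend
        · left; rw [hfull]; ring
        · right; exact hend
      · left
        have h0 : μ - Tstep c rd A μ k = 0 := by rw [heq]; ring
        rw [h0, EAT_neg c rd (by simp)]
        simp [heq]
    · rw [EAT_neg c rd hg]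
      push_neg at hg
      rcases lt_or_eq_of_le hμ with hμ' | hμ'
      · right
        intro h
        have hde := hg hμ'
        by_contra hA0
        have hs : (supp A).Nonempty := by
          refine ⟨h, mem_supp.2 ?_⟩
          rcases lt_or_eq_of_le (hA h) with h' | h'
          · exact h'
          · exact absurd h'.symm hA0
        exact absurd (ded_nonempty_of_member c rd hik hs) (Finset.not_nonempty_iff_eq_empty.2 hde)
      · left; simp [← hμ']

/-- exhaustion: if a doctor ate something, everything they like better is fully eaten -/
lemma EAT_exhaust {A : H → ℝ} {μ : ℝ} (hA : ∀ h, 0 ≤ A h) (hμ : 0 ≤ μ)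
    {i : D} {h h' : H} (hbetter : rd i h < rd i h')
    (hx : 0 < (EAT c rd k A μ).1 i h') : (EAT c rd k A μ).2 h = 0 := by
  generalize hcard : (supp A).card = N
  induction N using Nat.strong_induction_on generalizing A μ with
  | _ N ih =>
    by_cases hg : 0 < μ ∧ (ded c rd A k).Nonempty
    · rw [EAT_pos c rd hA hg] at hx ⊢
      simp only at hx ⊢
      have hA' := Anext_nonneg c rd hA hg.1 hg.2
      have hμ' : 0 ≤ μ - Tstep c rd A μ k := by
        linarith [Tstep_le c rd (A := A) (μ := μ) (k := k)]
      by_cases hbite : c i = k ∧ h' = bst rd (supp A) i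
      · have hns : h ∉ supp A := by
          intro hmem
          have := bst_min rd hmem i
          rw [← hbite.2] at this
          omega
        have hA0 : A h = 0 := le_antisymm (by simpa [mem_supp] using hns) (hA h)
        have hAn0 : Anext c rd A μ k h = 0 :=
          le_antisymm ((Anext_le c rd hg.1 hg.2 h).trans_eq hA0)
            (Anext_nonneg c rd hA hg.1 hg.2 h)
        exact EAT_end_zero_of_zero c rd hA' hμ' hAn0
      · have hx' : 0 < (EAT c rd k (Anext c rd A μ k) (μ - Tstep c rd A μ k)).1 i h' := by
          rw [if_neg hbite] at hx
          simpa using hx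
        rcases lt_or_eq_of_le (Tstep_le c rd (A := A) (μ := μ) (k := k)) with hlt | heq
        · exact ih _ (hcard ▸ death c rd hg.1 hg.2 hlt) hA' hμ' hx' rfl
        · have h0 : μ - Tstep c rd A μ k = 0 := by rw [heq]; ring
          rw [h0] at hx'
          rw [EAT_neg c rd (by simp)] at hx'
          simp at hx'
    · rw [EAT_neg c rd hg] at hx
      simp at hx

end EATlemmas


section Fair

variable {k : K}

/-- sd-fairness within the cluster: along any upper set of `i`'s preferences,
`i` eats at least as much as any fellow cluster member `j`. -/
lemma EAT_fair {A : H → ℝ} {μ : ℝ} (hA : ∀ h, 0 ≤ A h) (hμ : 0 ≤ μ)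
    {i j : D} (hik : c i = k) (hjk : c j = k) (r : ℕ) :
    ∑ h ∈ univ.filter (fun h => rd i h ≤ r), (EAT c rd k A μ).1 j h
      ≤ ∑ h ∈ univ.filter (fun h => rd i h ≤ r), (EAT c rd k A μ).1 i h := by
  generalize hcard : (supp A).card = N
  induction N using Nat.strong_induction_on generalizing A μ with
  | _ N ih =>
    by_cases hg : 0 < μ ∧ (ded c rd A k).Nonempty
    · rw [EAT_pos c rd hA hg]
      simp only [Finset.sum_add_distrib]
      have hA' := Anext_nonneg c rd hA hg.1 hg.2
      have hμ' : 0 ≤ μ - Tstep c rd A μ k := by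
        linarith [Tstep_le c rd (A := A) (μ := μ) (k := k)]
      have hT : 0 < Tstep c rd A μ k := Tstep_pos c rd hg.1 hg.2
      have hs : (supp A).Nonempty := supp_nonempty_of_ded c rd hg.2
      have hrec : ∑ h ∈ univ.filter (fun h => rd i h ≤ r),
            (EAT c rd k (Anext c rd A μ k) (μ - Tstep c rd A μ k)).1 j h
          ≤ ∑ h ∈ univ.filter (fun h => rd i h ≤ r),
            (EAT c rd k (Anext c rd A μ k) (μ - Tstep c rd A μ k)).1 i h := by
        rcases lt_or_eq_of_le (Tstep_le c rd (A := A) (μ := μ) (k := k)) with hlt | heq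
        · exact ih _ (hcard ▸ death c rd hg.1 hg.2 hlt) hA' hμ' rfl
        · have h0 : μ - Tstep c rd A μ k = 0 := by rw [heq]; ring
          rw [h0, EAT_neg c rd (by simp)]
          simp
      have hbsum : ∀ d : D, c d = k →
          ∑ h ∈ univ.filter (fun h => rd i h ≤ r),
            (if c d = k ∧ h = bst rd (supp A) d then Tstep c rd A μ k else 0)
          = if bst rd (supp A) d ∈ univ.filter (fun h => rd i h ≤ r)
              then Tstep c rd A μ k else 0 := by
        intro d hdk
        simp only [hdk, true_and]
        rw [Finset.sum_ite_eq' (univ.filter (fun h => rd i h ≤ r)) (bst rd (supp A) d)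
          (fun _ => Tstep c rd A μ k)]
      rw [hbsum i hik, hbsum j hjk]
      have hbite : (if bst rd (supp A) j ∈ univ.filter (fun h => rd i h ≤ r)
            then Tstep c rd A μ k else 0)
          ≤ (if bst rd (supp A) i ∈ univ.filter (fun h => rd i h ≤ r)
            then Tstep c rd A μ k else 0) := by
        by_cases hbi : bst rd (supp A) i ∈ univ.filter (fun h => rd i h ≤ r)
        · rw [if_pos hbi]
          split
          · exact le_rfl
          · exact le_of_lt hT
        · rw [if_neg hbi]
          have hbj : bst rd (supp A) j ∉ univ.filter (fun h => rd i h ≤ r) := by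
            intro hmem
            refine hbi (Finset.mem_filter.2 ⟨Finset.mem_univ _, ?_⟩)
            have h1 : rd i (bst rd (supp A) i) ≤ rd i (bst rd (supp A) j) :=
              bst_min rd (bst_mem rd hs j) i
            have h2 : rd i (bst rd (supp A) j) ≤ r := (Finset.mem_filter.1 hmem).2
            omega
          rw [if_neg hbj]
      linarith
    · rw [EAT_neg c rd hg]
      simp

end Fair

section Mono

variable {k : K}

lemma shift_nonneg {A : H → ℝ} {μ : ℝ} {t : ℝ} (hA : ∀ h, 0 ≤ A h)
    (hg : 0 < μ ∧ (ded c rd A k).Nonempty) (ht0 : 0 ≤ t) (ht : t ≤ Tstep c rd A μ k)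
    (h : H) : 0 ≤ A h - t * (nr c rd (supp A) k h : ℝ) := by
  rcases Nat.eq_zero_or_pos (nr c rd (supp A) k h) with h0 | hpos
  · rw [h0]; simpa using hA h
  · have hmem : h ∈ supp A := nr_pos_mem c rd (supp_nonempty_of_ded c rd hg.2) hpos
    have hd : h ∈ ded c rd A k := Finset.mem_filter.2 ⟨hmem, hpos⟩
    have hle := le_trans ht (Tstep_le_death c rd (μ := μ) hd)
    have hn : (0:ℝ) < (nr c rd (supp A) k h : ℝ) := by exact_mod_cast hpos
    rw [le_div_iff₀ hn] at hle
    linarith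

lemma min'_image_sub {s : Finset H} (hs : s.Nonempty) (f : H → ℝ) (t : ℝ) :
    (s.image (fun h => f h - t)).min' (hs.image _) = (s.image f).min' (hs.image _) - t := by
  apply le_antisymm
  · obtain ⟨v, hv, he⟩ : ∃ h ∈ s, (s.image f).min' (hs.image _) = f h := by
      have := (s.image f).min'_mem (hs.image _)
      rcases Finset.mem_image.1 this with ⟨h, hh, hv⟩
      exact ⟨h, hh, hv.symm⟩
    rw [he]
    exact Finset.min'_le _ _ (Finset.mem_image_of_mem _ hv)
  · rw [Finset.le_min'_iff]
    intro y hy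
    rcases Finset.mem_image.1 hy with ⟨h, hh, rfl⟩
    have : (s.image f).min' (hs.image _) ≤ f h := Finset.min'_le _ _ (Finset.mem_image_of_mem _ hh)
    linarith

/-- prefix splitting: advancing time by `t ≤ Tstep` does not change the final leftover -/
lemma EAT_split {A : H → ℝ} {μ : ℝ} {t : ℝ} (hA : ∀ h, 0 ≤ A h)
    (hg : 0 < μ ∧ (ded c rd A k).Nonempty) (ht0 : 0 ≤ t) (ht : t ≤ Tstep c rd A μ k) :
    (EAT c rd k A μ).2
      = (EAT c rd k (fun h => A h - t * (nr c rd (supp A) k h : ℝ)) (μ - t)).2 := by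
  rcases lt_or_eq_of_le ht with htlt | hteq
  swap
  · -- t = Tstep : this is exactly one step of the recursion
    subst hteq
    rw [EAT_pos c rd hA hg]
    rfl
  · -- t < Tstep
    set B := fun h => A h - t * (nr c rd (supp A) k h : ℝ) with hB
    have hT : 0 < Tstep c rd A μ k := Tstep_pos c rd hg.1 hg.2
    have hTμ : Tstep c rd A μ k ≤ μ := Tstep_le c rd
    have hBnn : ∀ h, 0 ≤ B h := shift_nonneg c rd hA hg ht0 ht
    have hsupp : supp B = supp A := by
      apply Finset.ext
      intro h
      rw [mem_supp, mem_supp]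
      constructor
      · intro hb
        rcases lt_or_eq_of_le (hA h) with h' | h'
        · exact h'
        · exfalso
          have hn0 : nr c rd (supp A) k h = 0 := by
            by_contra hc
            exact absurd (nr_pos_mem c rd (supp_nonempty_of_ded c rd hg.2)
              (Nat.pos_of_ne_zero hc)) (by rw [mem_supp, ← h']; exact lt_irrefl 0)
          rw [hB] at hb
          simp only [hn0, Nat.cast_zero, mul_zero, sub_zero] at hb
          rw [← h'] at hb
          exact lt_irrefl _ hb
      · intro ha
        rcases Nat.eq_zero_or_pos (nr c rd (supp A) k h) with h0 | hpos
        · rw [hB]; simp only [h0, Nat.cast_zero, mul_zero, sub_zero]; exact ha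
        · have hd : h ∈ ded c rd A k :=
            Finset.mem_filter.2 ⟨mem_supp.2 ha, hpos⟩
          have hdd := Tstep_le_death c rd (μ := μ) hd
          have hn : (0:ℝ) < (nr c rd (supp A) k h : ℝ) := by exact_mod_cast hpos
          have : t < A h / (nr c rd (supp A) k h : ℝ) := lt_of_lt_of_le htlt hdd
          rw [lt_div_iff₀ hn] at this
          rw [hB]
          simp only
          nlinarith
    have hnr : ∀ h, nr c rd (supp B) k h = nr c rd (supp A) k h := by
      intro h; rw [hsupp]
    have hded : ded c rd B k = ded c rd A k := by
      rw [ded, ded, hsupp]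
    have hgB : 0 < μ - t ∧ (ded c rd B k).Nonempty := by
      refine ⟨by linarith, ?_⟩
      rw [hded]; exact hg.2
    -- step time of B
    have min'_eq_of_eq : ∀ {s t : Finset ℝ} (hst : s = t) (hs : s.Nonempty) (ht : t.Nonempty),
        s.min' hs = t.min' ht := by
      rintro s t rfl hs ht; rfl
    have hTB : Tstep c rd B (μ - t) k = Tstep c rd A μ k - t := by
      have himg : ((ded c rd B k).image (fun h => B h / (nr c rd (supp B) k h : ℝ)))
          = ((ded c rd A k).image
              (fun h => A h / (nr c rd (supp A) k h : ℝ) - t)) := by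
        rw [hded]
        apply Finset.image_congr
        intro h hh
        rcases Finset.mem_filter.1 hh with ⟨hmem, hpos⟩
        have hn : (nr c rd (supp A) k h : ℝ) ≠ 0 := by
          have : nr c rd (supp A) k h ≠ 0 := hpos.ne'
          exact_mod_cast this
        show B h / (nr c rd (supp B) k h : ℝ) = A h / (nr c rd (supp A) k h : ℝ) - t
        rw [hnr h]
        simp only [hB]
        field_simp
      have e2 := min'_image_sub (s := ded c rd A k) hg.2
        (fun h => A h / (nr c rd (supp A) k h : ℝ)) t
      rw [Tstep, Tstep, dif_pos hgB.2, dif_pos hg.2,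
        min'_eq_of_eq himg (Finset.Nonempty.image hgB.2 _) (Finset.Nonempty.image hg.2 _),
        e2, min_sub_sub_right]
    have hAnext : Anext c rd B (μ - t) k = Anext c rd A μ k := by
      funext h
      rw [Anext, Anext, hTB, hnr, hB]
      ring
    rw [EAT_pos c rd hA hg, EAT_pos c rd hBnn hgB]
    simp only
    rw [hAnext, hTB]
    congr 1
    ring

/-- gross-substitutes comparative statics: bigger capacities leave bigger leftovers -/
lemma EAT_mono (hinj : ∀ i : D, Function.Injective (rd i))
    {A A' : H → ℝ} {μ : ℝ} (hA : ∀ h, 0 ≤ A h) (hA' : ∀ h, 0 ≤ A' h)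
    (hle : ∀ h, A h ≤ A' h) (hμ : 0 ≤ μ) :
    ∀ h, (EAT c rd k A μ).2 h ≤ (EAT c rd k A' μ).2 h := by
  generalize hcard : (supp A).card + (supp A').card = N
  induction N using Nat.strong_induction_on generalizing A A' μ with
  | _ N ih =>
    rcases lt_or_eq_of_le hμ with hμpos | hμ0
    swap
    · rw [EAT_neg c rd (by rw [← hμ0]; simp), EAT_neg c rd (by rw [← hμ0]; simp)]
      exact hle
    by_cases hgA : (ded c rd A k).Nonempty
    swap
    · -- ded A empty: either supp A empty (A ≡ 0) or the cluster is uninhabited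
      by_cases hclus : ∃ i : D, c i = k
      · -- cluster inhabited ⇒ supp A = ∅ ⇒ A ≡ 0
        obtain ⟨i, hik⟩ := hclus
        have hsupp : ¬ (supp A).Nonempty := by
          intro hs
          exact hgA (ded_nonempty_of_member c rd hik hs)
        have hA0 : ∀ h, A h = 0 := by
          intro h
          by_contra hc
          exact hsupp ⟨h, mem_supp.2 (lt_of_le_of_ne (hA h) (Ne.symm hc))⟩
        intro h
        rw [EAT_neg c rd (by rintro ⟨-, hd⟩; exact hgA hd)]
        have h1 : (0:ℝ) ≤ (EAT c rd k A' μ).2 h := ((EAT_nonneg c rd hA' hμ).2 h).1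
        simpa [hA0 h] using h1
      · -- cluster uninhabited: nothing is eaten on either side
        push_neg at hclus
        have hnr0 : ∀ (s : Finset H) (h : H), nr c rd s k h = 0 := by
          intro s h
          rw [nr, Finset.card_eq_zero]
          apply Finset.filter_eq_empty_iff.2
          intro i _
          exact fun hc => hclus i hc.1
        have hded' : ¬ (ded c rd A' k).Nonempty := by
          rintro ⟨h, hh⟩
          rcases Finset.mem_filter.1 hh with ⟨-, hpos⟩
          rw [hnr0] at hpos
          exact lt_irrefl _ hpos
        rw [EAT_neg c rd (by rintro ⟨-, hd⟩; exact hgA hd),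
          EAT_neg c rd (by rintro ⟨-, hd⟩; exact hded' hd)]
        exact hle
    · -- main case: both guards hold
      have hsub : supp A ⊆ supp A' := by
        intro h hh
        rw [mem_supp] at hh ⊢
        exact lt_of_lt_of_le hh (hle h)
      have hgA' : (ded c rd A' k).Nonempty := by
        obtain ⟨h0, hh0⟩ := id hgA
        rcases Finset.mem_filter.1 hh0 with ⟨-, hpos⟩
        have hex : ∃ i : D, c i = k := by
          rw [nr, Finset.card_pos] at hpos
          obtain ⟨i, hi⟩ := hpos
          exact ⟨i, (Finset.mem_filter.1 hi).2.1⟩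
        obtain ⟨i, hik⟩ := hex
        obtain ⟨z, hz⟩ := supp_nonempty_of_ded c rd hgA
        exact ded_nonempty_of_member c rd hik ⟨z, hsub hz⟩
      have hGA : 0 < μ ∧ (ded c rd A k).Nonempty := ⟨hμpos, hgA⟩
      have hGA' : 0 < μ ∧ (ded c rd A' k).Nonempty := ⟨hμpos, hgA'⟩
      -- rates comparison
      have hrates : ∀ h, h ∈ supp A →
          nr c rd (supp A') k h ≤ nr c rd (supp A) k h := by
        intro h hh
        apply Finset.card_le_card
        intro i hi
        rcases Finset.mem_filter.1 hi with ⟨-, hik, hbst⟩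
        refine Finset.mem_filter.2 ⟨Finset.mem_univ _, hik, ?_⟩
        have h1 : rd i (bst rd (supp A) i) ≤ rd i h := bst_min rd hh i
        have h2 : rd i (bst rd (supp A') i)
            ≤ rd i (bst rd (supp A) i) :=
          bst_min rd (hsub (bst_mem rd (supp_nonempty_of_ded c rd hgA) i)) i
        rw [hbst] at h2
        exact hinj i (le_antisymm h1 h2)
      have htpos : 0 < min (Tstep c rd A μ k) (Tstep c rd A' μ k) :=
        lt_min (Tstep_pos c rd hμpos hgA) (Tstep_pos c rd hμpos hgA')
      set t := min (Tstep c rd A μ k) (Tstep c rd A' μ k) with htdef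
      have htA : t ≤ Tstep c rd A μ k := min_le_left _ _
      have htA' : t ≤ Tstep c rd A' μ k := min_le_right _ _
      have hsplit : (EAT c rd k A μ).2 = (EAT c rd k
          (fun h => A h - t * (nr c rd (supp A) k h : ℝ)) (μ - t)).2 :=
        EAT_split c rd hA hGA htpos.le htA
      have hsplit' : (EAT c rd k A' μ).2 = (EAT c rd k
          (fun h => A' h - t * (nr c rd (supp A') k h : ℝ)) (μ - t)).2 :=
        EAT_split c rd hA' hGA' htpos.le htA'
      set A1 := fun h => A h - t * (nr c rd (supp A) k h : ℝ) with hA1def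
      set A1' := fun h => A' h - t * (nr c rd (supp A') k h : ℝ) with hA1'def
      have hA1nn : ∀ h, 0 ≤ A1 h := shift_nonneg c rd hA hGA htpos.le htA
      have hA1'nn : ∀ h, 0 ≤ A1' h := shift_nonneg c rd hA' hGA' htpos.le htA'
      have hle1 : ∀ h, A1 h ≤ A1' h := by
        intro h
        by_cases hh : h ∈ supp A
        · have hr : (nr c rd (supp A') k h : ℝ) ≤ (nr c rd (supp A) k h : ℝ) := by
            exact_mod_cast hrates h hh
          have hlh := hle h
          simp only [hA1def, hA1'def]
          nlinarith
        · have hA0 : A h = 0 := le_antisymm (by simpa [mem_supp] using hh) (hA h)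
          have hn0 : nr c rd (supp A) k h = 0 := by
            by_contra hc
            exact hh (nr_pos_mem c rd (supp_nonempty_of_ded c rd hgA)
              (Nat.pos_of_ne_zero hc))
          have hz : A1 h = 0 := by simp [hA1def, hA0, hn0]
          rw [hz]
          exact hA1'nn h
      have htμ' : t ≤ μ := le_trans htA (Tstep_le c rd)
      intro h
      rw [hsplit, hsplit']
      rcases lt_or_eq_of_le htμ' with htμ | htμ
      · -- t < μ: a death occurs in (at least) one world; recurse
        have hd' : (supp A1').card ≤ (supp A').card :=
          Finset.card_le_card (fun x hx => by
            rw [mem_supp] at hx ⊢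
            calc (0:ℝ) < A1' x := hx
              _ ≤ A' x := by
                  have h1 : (0:ℝ) ≤ t := htpos.le
                  have h2 : (0:ℝ) ≤ (nr c rd (supp A') k x : ℝ) := Nat.cast_nonneg _
                  simp only [hA1'def]
                  nlinarith)
        have hd0 : (supp A1).card ≤ (supp A).card :=
          Finset.card_le_card (fun x hx => by
            rw [mem_supp] at hx ⊢
            calc (0:ℝ) < A1 x := hx
              _ ≤ A x := by
                  have h1 : (0:ℝ) ≤ t := htpos.le
                  have h2 : (0:ℝ) ≤ (nr c rd (supp A) k x : ℝ) := Nat.cast_nonneg _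
                  simp only [hA1def]
                  nlinarith)
        have hdecr : (supp A1).card + (supp A1').card < N := by
          rcases min_cases (Tstep c rd A μ k) (Tstep c rd A' μ k) with ⟨he, _⟩ | ⟨he, _⟩
          · have hteq : t = Tstep c rd A μ k := by rw [htdef, he]
            have hd : (supp A1).card < (supp A).card := by
              have hAn : A1 = Anext c rd A μ k := by
                funext x
                simp only [hA1def, Anext, hteq]
              rw [hAn]
              exact death c rd hμpos hgA (by rw [← hteq]; exact htμ)
            omega
          · have hteq : t = Tstep c rd A' μ k := by rw [htdef, he]
            have hd : (supp A1').card < (supp A').card := by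
              have hAn : A1' = Anext c rd A' μ k := by
                funext x
                simp only [hA1'def, Anext, hteq]
              rw [hAn]
              exact death c rd hμpos hgA' (by rw [← hteq]; exact htμ)
            omega
        exact ih _ hdecr hA1nn hA1'nn hle1 (by linarith) rfl h
      · -- t = μ: both runs end right after the advance
        have h0 : μ - t = 0 := by rw [htμ]; ring
        rw [h0, EAT_neg c rd (by simp), EAT_neg c rd (by simp)]
        exact hle1 h

end Mono


section FixedPoint

variable (rh : H → K → ℕ)

noncomputable def hRej (B : K → H → ℝ) (k : K) (h : H) : ℝ :=
  max 0 (min (B k h) ((∑ k' ∈ univ.filter (fun k' => rh h k' ≤ rh h k), B k' h) - 1))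

noncomputable def dRej (A : K → H → ℝ) (k : K) (h : H) : ℝ := (EAT c rd k (A k) 1).2 h

lemma hRej_nonneg (B : K → H → ℝ) (k : K) (h : H) : 0 ≤ hRej rh B k h := le_max_left _ _

lemma hRej_le (B : K → H → ℝ) (hB : ∀ k h, 0 ≤ B k h) (k : K) (h : H) :
    hRej rh B k h ≤ B k h :=
  max_le (hB k h) (min_le_left _ _)

lemma hRej_mono {B B' : K → H → ℝ} (hle : ∀ k h, B k h ≤ B' k h) (k : K) (h : H) :
    hRej rh B k h ≤ hRej rh B' k h := by
  apply max_le (le_max_left _ _)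
  refine le_max_of_le_right (min_le_min (hle k h) ?_)
  have : ∑ k' ∈ univ.filter (fun k' => rh h k' ≤ rh h k), B k' h
      ≤ ∑ k' ∈ univ.filter (fun k' => rh h k' ≤ rh h k), B' k' h :=
    Finset.sum_le_sum (fun k' _ => hle k' h)
  linarith

lemma dRej_nonneg (A : K → H → ℝ) (hA : ∀ k h, 0 ≤ A k h) (k : K) (h : H) :
    0 ≤ dRej c rd A k h := ((EAT_nonneg c rd (hA k) zero_le_one).2 h).1

lemma dRej_le (A : K → H → ℝ) (hA : ∀ k h, 0 ≤ A k h) (k : K) (h : H) :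
    dRej c rd A k h ≤ A k h := ((EAT_nonneg c rd (hA k) zero_le_one).2 h).2

lemma dRej_mono (hinj : ∀ i : D, Function.Injective (rd i)) {A A' : K → H → ℝ}
    (hA : ∀ k h, 0 ≤ A k h) (hA' : ∀ k h, 0 ≤ A' k h)
    (hle : ∀ k h, A k h ≤ A' k h) (k : K) (h : H) :
    dRej c rd A k h ≤ dRej c rd A' k h :=
  EAT_mono c rd hinj (hA k) (hA' k) (hle k) zero_le_one h

/-- post-fixed pairs for the (Hatfield–Milgrom style) rejection operator -/
def inZ (p : (K → H → ℝ) × (K → H → ℝ)) : Prop :=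
  (∀ k h, 0 ≤ p.1 k h ∧ p.1 k h ≤ 1) ∧ (∀ k h, 0 ≤ p.2 k h ∧ p.2 k h ≤ 1) ∧
  (∀ k h, p.1 k h ≤ 1 - hRej rh p.2 k h) ∧ (∀ k h, 1 - dRej c rd p.1 k h ≤ p.2 k h)

lemma inZ_bot : inZ c rd rh (fun _ _ => (0:ℝ), fun _ _ => (1:ℝ)) := by
  refine ⟨fun k h => ⟨le_rfl, zero_le_one⟩, fun k h => ⟨zero_le_one, le_rfl⟩,
    fun k h => ?_, fun k h => ?_⟩
  · show (0:ℝ) ≤ 1 - hRej rh (fun _ _ => (1:ℝ)) k h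
    have := hRej_le rh (fun _ _ => (1:ℝ)) (fun _ _ => zero_le_one) k h
    linarith
  · show 1 - dRej c rd (fun _ _ => (0:ℝ)) k h ≤ 1
    have := dRej_nonneg c rd (fun _ _ => (0:ℝ)) (fun _ _ => le_rfl) k h
    linarith

noncomputable def Afix (k : K) (h : H) : ℝ :=
  sSup ((fun p => p.1 k h) '' {p | inZ c rd rh p})

noncomputable def Bfix (k : K) (h : H) : ℝ :=
  sInf ((fun p => p.2 k h) '' {p | inZ c rd rh p})

lemma Aset_nonempty (k : K) (h : H) :
    ((fun p => p.1 k h) '' {p | inZ c rd rh p}).Nonempty :=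
  ⟨0, ⟨_, inZ_bot c rd rh, rfl⟩⟩

lemma Bset_nonempty (k : K) (h : H) :
    ((fun p => p.2 k h) '' {p | inZ c rd rh p}).Nonempty :=
  ⟨1, ⟨_, inZ_bot c rd rh, rfl⟩⟩

lemma Aset_bdd (k : K) (h : H) : BddAbove ((fun p => p.1 k h) '' {p | inZ c rd rh p}) := by
  refine ⟨1, ?_⟩
  rintro x ⟨p, hp, rfl⟩
  exact (hp.1 k h).2

lemma Bset_bdd (k : K) (h : H) : BddBelow ((fun p => p.2 k h) '' {p | inZ c rd rh p}) := by
  refine ⟨0, ?_⟩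
  rintro x ⟨p, hp, rfl⟩
  exact (hp.2.1 k h).1

lemma le_Afix {p} (hp : inZ c rd rh p) (k : K) (h : H) : p.1 k h ≤ Afix c rd rh k h :=
  le_csSup (Aset_bdd c rd rh k h) ⟨p, hp, rfl⟩

lemma Bfix_le {p} (hp : inZ c rd rh p) (k : K) (h : H) : Bfix c rd rh k h ≤ p.2 k h :=
  csInf_le (Bset_bdd c rd rh k h) ⟨p, hp, rfl⟩

lemma Afix_nonneg (k : K) (h : H) : 0 ≤ Afix c rd rh k h :=
  le_Afix c rd rh (inZ_bot c rd rh) k h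

lemma Afix_le_one (k : K) (h : H) : Afix c rd rh k h ≤ 1 :=
  csSup_le (Aset_nonempty c rd rh k h) (by rintro x ⟨p, hp, rfl⟩; exact (hp.1 k h).2)

lemma Bfix_nonneg (k : K) (h : H) : 0 ≤ Bfix c rd rh k h :=
  le_csInf (Bset_nonempty c rd rh k h) (by rintro x ⟨p, hp, rfl⟩; exact (hp.2.1 k h).1)

lemma Bfix_le_one (k : K) (h : H) : Bfix c rd rh k h ≤ 1 :=
  Bfix_le c rd rh (inZ_bot c rd rh) k h

lemma upper_bound_post {p} (hp : inZ c rd rh p)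
    (hinj : ∀ i : D, Function.Injective (rd i)) :
    (∀ k h, p.1 k h ≤ 1 - hRej rh (Bfix c rd rh) k h) ∧
    (∀ k h, 1 - dRej c rd (Afix c rd rh) k h ≤ p.2 k h) := by
  constructor
  · intro k h
    refine le_trans (hp.2.2.1 k h) ?_
    have := hRej_mono rh (fun k h => Bfix_le c rd rh hp k h) k h
    linarith
  · intro k h
    refine le_trans ?_ (hp.2.2.2 k h)
    have := dRej_mono c rd hinj (fun k h => (hp.1 k h).1)
      (Afix_nonneg c rd rh) (fun k h => le_Afix c rd rh hp k h) k h
    linarith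

lemma fix_post (hinj : ∀ i : D, Function.Injective (rd i)) :
    (∀ k h, Afix c rd rh k h ≤ 1 - hRej rh (Bfix c rd rh) k h) ∧
    (∀ k h, 1 - dRej c rd (Afix c rd rh) k h ≤ Bfix c rd rh k h) := by
  constructor
  · intro k h
    exact csSup_le (Aset_nonempty c rd rh k h)
      (by rintro x ⟨p, hp, rfl⟩; exact (upper_bound_post c rd rh hp hinj).1 k h)
  · intro k h
    exact le_csInf (Bset_nonempty c rd rh k h)
      (by rintro x ⟨p, hp, rfl⟩; exact (upper_bound_post c rd rh hp hinj).2 k h)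

lemma inZ_q (hinj : ∀ i : D, Function.Injective (rd i)) :
    inZ c rd rh (fun k h => 1 - hRej rh (Bfix c rd rh) k h,
      fun k h => 1 - dRej c rd (Afix c rd rh) k h) := by
  have hBnn := Bfix_nonneg c rd rh
  have hB1 := Bfix_le_one c rd rh
  have hAnn := Afix_nonneg c rd rh
  have hA1 := Afix_le_one c rd rh
  have hq1nn : ∀ k h, (0:ℝ) ≤ 1 - hRej rh (Bfix c rd rh) k h := by
    intro k h
    have h1 := hRej_le rh (Bfix c rd rh) hBnn k h
    have h2 := hB1 k h
    linarith
  have hq2nn : ∀ k h, (0:ℝ) ≤ 1 - dRej c rd (Afix c rd rh) k h := by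
    intro k h
    have h1 := dRej_le c rd (Afix c rd rh) hAnn k h
    have h2 := hA1 k h
    linarith
  refine ⟨fun k h => ⟨hq1nn k h, by simp only; have := hRej_nonneg rh (Bfix c rd rh) k h; linarith⟩,
    fun k h => ⟨hq2nn k h, by simp only; have := dRej_nonneg c rd (Afix c rd rh) hAnn k h; linarith⟩,
    fun k h => ?_, fun k h => ?_⟩
  · -- q.1 ≤ 1 - hRej(q.2), since q.2 ≤ Bfix
    have hle : ∀ k h, (1 - dRej c rd (Afix c rd rh) k h) ≤ Bfix c rd rh k h :=
      (fix_post c rd rh hinj).2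
    have := hRej_mono rh hle k h
    simp only
    linarith
  · -- 1 - dRej(q.1) ≤ q.2, since Afix ≤ q.1
    have hle : ∀ k h, Afix c rd rh k h ≤ 1 - hRej rh (Bfix c rd rh) k h :=
      (fix_post c rd rh hinj).1
    have := dRej_mono c rd hinj hAnn hq1nn hle k h
    simp only
    linarith

/-- the fixed point equations -/
lemma Afix_eq (hinj : ∀ i : D, Function.Injective (rd i)) (k : K) (h : H) :
    Afix c rd rh k h = 1 - hRej rh (Bfix c rd rh) k h :=
  le_antisymm ((fix_post c rd rh hinj).1 k h) (le_Afix c rd rh (inZ_q c rd rh hinj) k h)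

lemma Bfix_eq (hinj : ∀ i : D, Function.Injective (rd i)) (k : K) (h : H) :
    Bfix c rd rh k h = 1 - dRej c rd (Afix c rd rh) k h :=
  le_antisymm (Bfix_le c rd rh (inZ_q c rd rh hinj) k h) ((fix_post c rd rh hinj).2 k h)

end FixedPoint


section Alloc

variable (rh : H → K → ℕ)

noncomputable def xalloc (i : D) (h : H) : ℝ :=
  (EAT c rd (c i) (Afix c rd rh (c i)) 1).1 i h

noncomputable def yuse (k : K) (h : H) : ℝ :=
  Afix c rd rh k h - (EAT c rd k (Afix c rd rh k) 1).2 h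

lemma xalloc_nonneg (i : D) (h : H) : 0 ≤ xalloc c rd rh i h :=
  ((EAT_nonneg c rd (Afix_nonneg c rd rh (c i)) zero_le_one).1 i h)

lemma yuse_col (k : K) (h : H) :
    ∑ i ∈ univ.filter (fun i => c i = k), xalloc c rd rh i h = yuse c rd rh k h := by
  rw [yuse, ← EAT_col c rd (Afix_nonneg c rd rh k) zero_le_one h]
  apply Finset.sum_congr rfl
  intro i hi
  have hik : c i = k := (Finset.mem_filter.1 hi).2
  rw [xalloc, hik]

lemma yuse_eq_acc (hinj : ∀ i : D, Function.Injective (rd i)) (k : K) (h : H) :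
    yuse c rd rh k h = Bfix c rd rh k h - hRej rh (Bfix c rd rh) k h := by
  have h1 := Afix_eq c rd rh hinj k h
  have h2 := Bfix_eq c rd rh hinj k h
  rw [yuse]
  have : (EAT c rd k (Afix c rd rh k) 1).2 h = dRej c rd (Afix c rd rh) k h := rfl
  rw [this]
  linarith

lemma acc_alg {b C : ℝ} (hb : 0 ≤ b) :
    b - max 0 (min b (C - 1)) = min 1 C - min 1 (C - b) := by
  rcases le_total C 1 with h1 | h1 <;> rcases le_total (C - b) 1 with h2 | h2 <;>
    rcases le_total b (C - 1) with h3 | h3 <;>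
      simp [min_def, max_def] <;> split_ifs <;> linarith

/-- telescoping sum of greedy acceptances -/
lemma acc_sum (hinjH : ∀ h : H, Function.Injective (rh h))
    (B : K → H → ℝ) (hB : ∀ k h, 0 ≤ B k h) (h : H) (s : Finset K)
    (hup : ∀ k ∈ s, ∀ k', rh h k' < rh h k → k' ∈ s) :
    ∑ k ∈ s, (B k h - hRej rh B k h) = min 1 (∑ k ∈ s, B k h) := by
  generalize hNs : s.card = N
  induction N using Nat.strong_induction_on generalizing s with
  | _ N ih =>
    rcases Finset.eq_empty_or_nonempty s with rfl | hs
    · simp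
    · obtain ⟨kb, hkb, hmax⟩ := s.exists_max_image (rh h) hs
      have hup' : ∀ k ∈ s.erase kb, ∀ k', rh h k' < rh h k → k' ∈ s.erase kb := by
        intro k hk k' hk'
        have hks : k ∈ s := Finset.mem_of_mem_erase hk
        refine Finset.mem_erase.2 ⟨?_, hup k hks k' hk'⟩
        intro heq
        subst heq
        exact absurd (lt_of_lt_of_le hk' (hmax k hks)) (lt_irrefl _)
      have hfilter : univ.filter (fun k' => rh h k' ≤ rh h kb) = s := by
        apply Finset.ext
        intro k'
        simp only [Finset.mem_filter, Finset.mem_univ, true_and]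
        constructor
        · intro hle
          rcases lt_or_eq_of_le hle with hlt | heq
          · exact hup kb hkb k' hlt
          · rw [hinjH h heq]; exact hkb
        · intro hk'
          exact hmax k' hk'
      have hCs : ∑ k' ∈ univ.filter (fun k' => rh h k' ≤ rh h kb), B k' h
          = ∑ k ∈ s, B k h := by rw [hfilter]
      have hsum : ∑ k ∈ s, B k h = B kb h + ∑ k ∈ s.erase kb, B k h :=
        (Finset.add_sum_erase s (fun k => B k h) hkb).symm
      have hterm : B kb h - hRej rh B kb h
          = min 1 (∑ k ∈ s, B k h) - min 1 (∑ k ∈ s.erase kb, B k h) := by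
        rw [hRej, hCs]
        have : (∑ k ∈ s, B k h) - B kb h = ∑ k ∈ s.erase kb, B k h := by
          rw [hsum]; ring
        rw [← this]
        exact acc_alg (hB kb h)
      have hIH : ∑ k ∈ s.erase kb, (B k h - hRej rh B k h)
          = min 1 (∑ k ∈ s.erase kb, B k h) := by
        refine ih (s.erase kb).card ?_ _ hup' rfl
        rw [← hNs]
        exact Finset.card_erase_lt_of_mem hkb
      rw [← Finset.add_sum_erase s _ hkb, hterm, hIH]
      ring

/-- column sums of the allocation -/
lemma col_eq_min (hinj : ∀ i : D, Function.Injective (rd i))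
    (hinjH : ∀ h : H, Function.Injective (rh h)) (h : H) :
    ∑ i, xalloc c rd rh i h = min 1 (∑ k, Bfix c rd rh k h) := by
  have h1 : ∑ i, xalloc c rd rh i h
      = ∑ k, ∑ i ∈ univ.filter (fun i => c i = k), xalloc c rd rh i h := by
    rw [Finset.sum_fiberwise_of_maps_to (fun i _ => Finset.mem_univ (c i))]
  rw [h1]
  have h2 : ∀ k, ∑ i ∈ univ.filter (fun i => c i = k), xalloc c rd rh i h
      = Bfix c rd rh k h - hRej rh (Bfix c rd rh) k h := by
    intro k
    rw [yuse_col, yuse_eq_acc c rd rh hinj]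
  rw [Finset.sum_congr rfl (fun k _ => h2 k)]
  exact acc_sum rh hinjH (Bfix c rd rh) (Bfix_nonneg c rd rh) h univ
    (fun k _ k' _ => Finset.mem_univ k')

lemma col_le_one (hinj : ∀ i : D, Function.Injective (rd i))
    (hinjH : ∀ h : H, Function.Injective (rh h)) (h : H) :
    ∑ i, xalloc c rd rh i h ≤ 1 := by
  rw [col_eq_min c rd rh hinj hinjH h]
  exact min_le_left _ _

/-- if some cluster is starving (offers everything), lower-priority clusters get nothing -/
lemma lower_zero (hinj : ∀ i : D, Function.Injective (rd i))
    {k k'' : K} {h : H} (hrank : rh h k < rh h k'')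
    (hB1 : Bfix c rd rh k h = 1) : yuse c rd rh k'' h = 0 := by
  rw [yuse_eq_acc c rd rh hinj]
  have hkk : k ≠ k'' := fun he => by rw [he] at hrank; exact lt_irrefl _ hrank
  have hpair : ({k, k''} : Finset K) ⊆ univ.filter (fun k' => rh h k' ≤ rh h k'') := by
    intro z hz
    rcases Finset.mem_insert.1 hz with rfl | hz
    · exact Finset.mem_filter.2 ⟨Finset.mem_univ _, le_of_lt hrank⟩
    · rw [Finset.mem_singleton.1 hz]
      exact Finset.mem_filter.2 ⟨Finset.mem_univ _, le_rfl⟩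
  have hsum : Bfix c rd rh k h + Bfix c rd rh k'' h
      ≤ ∑ k' ∈ univ.filter (fun k' => rh h k' ≤ rh h k''), Bfix c rd rh k' h := by
    have hsub := Finset.sum_le_sum_of_subset_of_nonneg hpair
      (fun z _ _ => Bfix_nonneg c rd rh z h)
    rw [Finset.sum_pair hkk] at hsub
    exact hsub
  rw [hB1] at hsum
  rw [hRej]
  have hnn := Bfix_nonneg c rd rh k'' h
  have : min (Bfix c rd rh k'' h)
      ((∑ k' ∈ univ.filter (fun k' => rh h k' ≤ rh h k''), Bfix c rd rh k' h) - 1)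
      = Bfix c rd rh k'' h := min_eq_left (by linarith)
  rw [this, max_eq_right hnn]
  ring

/-- every doctor is fully fed -/
lemma rows_one (hinj : ∀ i : D, Function.Injective (rd i))
    (hinjH : ∀ h : H, Function.Injective (rh h))
    (hcard : Fintype.card D = Fintype.card H) (i : D) :
    ∑ h, xalloc c rd rh i h = 1 := by
  by_contra hne
  have hrow_le : ∀ j : D, ∑ h, xalloc c rd rh j h ≤ 1 := fun j =>
    EAT_row_le c rd (Afix_nonneg c rd rh (c j)) zero_le_one j
  have hlt : ∑ h, xalloc c rd rh i h < 1 := lt_of_le_of_ne (hrow_le i) hne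
  -- dichotomy forces the cluster of i to be starving
  have hdich := EAT_row_dichotomy c rd (Afix_nonneg c rd rh (c i)) zero_le_one (rfl : c i = c i)
  have hend : ∀ h, (EAT c rd (c i) (Afix c rd rh (c i)) 1).2 h = 0 := by
    rcases hdich with hfull | hend
    · exact absurd hfull (by rw [show (∑ h, (EAT c rd (c i) (Afix c rd rh (c i)) 1).1 i h) = ∑ h, xalloc c rd rh i h from rfl]; exact hlt.ne)
    · exact hend
  have hB1 : ∀ h, Bfix c rd rh (c i) h = 1 := by
    intro h
    rw [Bfix_eq c rd rh hinj]
    have : dRej c rd (Afix c rd rh) (c i) h = 0 := hend h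
    rw [this]
    ring
  have hcols : ∀ h, ∑ j, xalloc c rd rh j h = 1 := by
    intro h
    rw [col_eq_min c rd rh hinj hinjH h]
    have h1 : (1:ℝ) ≤ ∑ k, Bfix c rd rh k h := by
      have h2 := Finset.single_le_sum (f := fun k => Bfix c rd rh k h)
        (fun k _ => Bfix_nonneg c rd rh k h) (Finset.mem_univ (c i))
      simpa [hB1 h] using h2
    exact min_eq_left h1
  have htot1 : ∑ j, ∑ h, xalloc c rd rh j h = (Fintype.card H : ℝ) := by
    rw [Finset.sum_comm]
    rw [Finset.sum_congr rfl (fun h _ => hcols h)]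
    simp [Finset.card_univ]
  have htot2 : ∑ j, ∑ h, xalloc c rd rh j h < (Fintype.card D : ℝ) := by
    have := Finset.sum_lt_sum (f := fun j => ∑ h, xalloc c rd rh j h)
      (g := fun _ => (1:ℝ)) (fun j _ => hrow_le j) ⟨i, Finset.mem_univ i, hlt⟩
    simpa [Finset.card_univ] using this
  rw [htot1, hcard] at htot2
  exact lt_irrefl _ htot2

/-- every hospital is fully used -/
lemma cols_one (hinj : ∀ i : D, Function.Injective (rd i))
    (hinjH : ∀ h : H, Function.Injective (rh h))
    (hcard : Fintype.card D = Fintype.card H) (h : H) :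
    ∑ i, xalloc c rd rh i h = 1 := by
  by_contra hne
  have hlt : ∑ i, xalloc c rd rh i h < 1 :=
    lt_of_le_of_ne (col_le_one c rd rh hinj hinjH h) hne
  have htot1 : ∑ h', ∑ i, xalloc c rd rh i h' = (Fintype.card D : ℝ) := by
    rw [Finset.sum_comm]
    rw [Finset.sum_congr rfl (fun i _ => rows_one c rd rh hinj hinjH hcard i)]
    simp [Finset.card_univ]
  have htot2 : ∑ h', ∑ i, xalloc c rd rh i h' < (Fintype.card H : ℝ) := by
    have := Finset.sum_lt_sum (f := fun h' => ∑ i, xalloc c rd rh i h')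
      (g := fun _ => (1:ℝ)) (fun h' _ => col_le_one c rd rh hinj hinjH h')
      ⟨h, Finset.mem_univ h, hlt⟩
    simpa [Finset.card_univ] using this
  rw [htot1, hcard] at htot2
  exact lt_irrefl _ htot2

/-- no blocking pair on the support -/
lemma support_stable (hinj : ∀ i : D, Function.Injective (rd i))
    (m : D ≃ H) (hm : ∀ i, 0 < xalloc c rd rh i (m i)) :
    ¬ ∃ (i : D) (h : H), m i ≠ h ∧ rd i h < rd i (m i) ∧
      rh h (c i) < rh h (c (m.symm h)) := by
  rintro ⟨i, h, -, hdp, hhp⟩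
  have hend : (EAT c rd (c i) (Afix c rd rh (c i)) 1).2 h = 0 :=
    EAT_exhaust c rd (Afix_nonneg c rd rh (c i)) zero_le_one hdp (hm i)
  have hB1 : Bfix c rd rh (c i) h = 1 := by
    rw [Bfix_eq c rd rh hinj]
    have : dRej c rd (Afix c rd rh) (c i) h = 0 := hend
    rw [this]; ring
  have hy0 : yuse c rd rh (c (m.symm h)) h = 0 := lower_zero c rd rh hinj hhp hB1
  have hx : 0 < xalloc c rd rh (m.symm h) h := by
    have := hm (m.symm h)
    rwa [Equiv.apply_symm_apply] at this
  have hle : xalloc c rd rh (m.symm h) h ≤ yuse c rd rh (c (m.symm h)) h := by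
    rw [← yuse_col]
    exact Finset.single_le_sum (f := fun j => xalloc c rd rh j h)
      (fun j _ => xalloc_nonneg c rd rh j h)
      (Finset.mem_filter.2 ⟨Finset.mem_univ _, rfl⟩)
  rw [hy0] at hle
  exact absurd (lt_of_lt_of_le hx hle) (lt_irrefl _)

/-- within-cluster sd-fairness of the allocation -/
lemma xalloc_fair {i j : D} (hcij : c i = c j) (r : ℕ) :
    ∑ h ∈ univ.filter (fun h => rd i h ≤ r), xalloc c rd rh j h
      ≤ ∑ h ∈ univ.filter (fun h => rd i h ≤ r), xalloc c rd rh i h := by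
  have hj : ∀ h, xalloc c rd rh j h = (EAT c rd (c i) (Afix c rd rh (c i)) 1).1 j h := by
    intro h
    rw [xalloc, ← hcij]
  rw [Finset.sum_congr rfl (fun h _ => hj h)]
  exact EAT_fair c rd (Afix_nonneg c rd rh (c i)) zero_le_one rfl hcij.symm r

end Alloc


section Ranks

variable {α : Type*} [Fintype α] [DecidableEq α]

noncomputable def rnk (p : α → α → Prop) (a : α) : ℕ :=
  (univ.filter (fun x => p x a)).card

lemma rnk_lt_of (p : α → α → Prop) (hp : IsStrictTotalOrder α p) {a b : α}
    (hab : p a b) : rnk p a < rnk p b := by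
  haveI := hp
  apply Finset.card_lt_card
  constructor
  · intro x hx
    rcases Finset.mem_filter.1 hx with ⟨-, hxa⟩
    exact Finset.mem_filter.2 ⟨Finset.mem_univ _, _root_.trans hxa hab⟩
  · intro hsub
    have ha : a ∈ univ.filter (fun x => p x b) :=
      Finset.mem_filter.2 ⟨Finset.mem_univ _, hab⟩
    have := hsub ha
    rcases Finset.mem_filter.1 this with ⟨-, haa⟩
    exact absurd haa (irrefl a)

lemma rnk_iff (p : α → α → Prop) (hp : IsStrictTotalOrder α p) (a b : α) :
    p a b ↔ rnk p a < rnk p b := by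
  haveI := hp
  constructor
  · exact rnk_lt_of p hp
  · intro hlt
    rcases trichotomous_of p a b with h | h | h
    · exact h
    · subst h; exact absurd hlt (lt_irrefl _)
    · exact absurd (rnk_lt_of p hp h) (by omega)

lemma rnk_inj (p : α → α → Prop) (hp : IsStrictTotalOrder α p) :
    Function.Injective (rnk p) := by
  haveI := hp
  intro a b hab
  rcases trichotomous_of p a b with h | h | h
  · exact absurd (rnk_lt_of p hp h) (by omega)
  · exact h
  · exact absurd (rnk_lt_of p hp h) (by omega)

end Ranks

end FSAE

open FSAE in
theorem fair_and_stable_allocation_exists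
    {D H K : Type*} [Fintype D] [Fintype H] [Fintype K]
    [DecidableEq D] [DecidableEq H] [DecidableEq K]
    (hcard : Fintype.card D = Fintype.card H) (hn : 1 ≤ Fintype.card D)
    (c : D → K) (hc : Function.Surjective c)
    (dpref : D → H → H → Prop) (hdpref : ∀ i, IsStrictTotalOrder H (dpref i))
    (hpref : H → K → K → Prop) (hhpref : ∀ h, IsStrictTotalOrder K (hpref h))
    (τ : ℝ) (hτ : 0 < τ) :
    ∃ π : (D ≃ H) → ℝ,
      IsAlloc π ∧
      ClusterPIIF c dpref π ∧
      (∑ m : D ≃ H,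
          Set.indicator
            {m : D ≃ H | ∃ (i : D) (h : H),
              m i ≠ h ∧ dpref i h (m i) ∧ hpref h (c i) (c (m.symm h))} π m) ≤ τ := by
  classical
  haveI hD : Nonempty D := Fintype.card_pos_iff.1 (by omega)
  haveI hH : Nonempty H := Fintype.card_pos_iff.1 (by omega)
  obtain ⟨e⟩ : Nonempty (D ≃ H) := ⟨Fintype.equivOfCardEq hcard⟩
  set rd : D → H → ℕ := fun i => rnk (dpref i) with hrd
  set rh : H → K → ℕ := fun h => rnk (hpref h) with hrh
  have hinj : ∀ i : D, Function.Injective (rd i) := fun i => rnk_inj _ (hdpref i)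
  have hinjH : ∀ h : H, Function.Injective (rh h) := fun h => rnk_inj _ (hhpref h)
  have hdiff : ∀ i a b, dpref i a b ↔ rd i a < rd i b := fun i a b => rnk_iff _ (hdpref i) a b
  have hhiff : ∀ h a b, hpref h a b ↔ rh h a < rh h b := fun h a b => rnk_iff _ (hhpref h) a b
  set x : D → H → ℝ := xalloc c rd rh with hx
  -- the doubly stochastic matrix
  set M : Matrix D D ℝ := fun i i' => x i (e i') with hM
  have hMds : M ∈ doublyStochastic ℝ D := by
    rw [mem_doublyStochastic_iff_sum]
    refine ⟨fun i j => xalloc_nonneg c rd rh i (e j), fun i => ?_, fun j => ?_⟩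
    · rw [show (∑ j, M i j) = ∑ j, x i (e j) from rfl, Equiv.sum_comp e (fun h => x i h)]
      exact rows_one c rd rh hinj hinjH hcard i
    · exact cols_one c rd rh hinj hinjH hcard (e j)
  obtain ⟨w, hw0, hw1, hwM⟩ := exists_eq_sum_perm_of_mem_doublyStochastic hMds
  -- permutation matrix entries
  have hperm : ∀ (σ : Equiv.Perm D) (a b : D),
      (σ.permMatrix ℝ) a b = if σ a = b then 1 else 0 := by
    intro σ a b
    simp only [Equiv.Perm.permMatrix, PEquiv.toMatrix_apply, Equiv.toPEquiv_apply,
      Option.mem_def, Option.some.injEq]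
  have hentry : ∀ a b, ∑ σ : Equiv.Perm D, w σ * (if σ a = b then 1 else 0) = M a b := by
    intro a b
    have h1 := congrFun (congrFun hwM a) b
    rw [Matrix.sum_apply] at h1
    rw [← h1]
    apply Finset.sum_congr rfl
    intro σ _
    rw [Matrix.smul_apply, hperm σ a b, smul_eq_mul]
  -- the allocation over matchings
  set π : (D ≃ H) → ℝ := fun m => w (m.trans e.symm) with hπ
  have hEquiv : ∀ (f : (D ≃ H) → ℝ), ∑ m : D ≃ H, f m = ∑ σ : Equiv.Perm D, f (σ.trans e) := by
    intro f
    exact (Equiv.sum_comp (Equiv.mk (fun σ : Equiv.Perm D => σ.trans e)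
      (fun m => m.trans e.symm)
      (fun σ => by ext z; simp) (fun m => by ext z; simp)) f).symm
  have hπe : ∀ σ : Equiv.Perm D, π (σ.trans e) = w σ := by
    intro σ
    rw [hπ]
    simp only
    rw [show (σ.trans e).trans e.symm = σ from by ext z; simp]
  -- prospects are the rows of x
  have hprospect : ∀ i h, prospect π i h = x i h := by
    intro i h
    rw [prospect, hEquiv (fun m => if m i = h then π m else 0)]
    have hstep : ∀ σ : Equiv.Perm D,
        (if (σ.trans e) i = h then π (σ.trans e) else 0)
          = w σ * (if σ i = e.symm h then 1 else 0) := by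
      intro σ
      rw [hπe σ]
      have hiff : (σ.trans e) i = h ↔ σ i = e.symm h := by
        constructor
        · intro hh; rw [← hh]; simp
        · intro hh; simp [Equiv.trans_apply, hh]
      by_cases hcnd : σ i = e.symm h
      · rw [if_pos (hiff.2 hcnd), if_pos hcnd, mul_one]
      · rw [if_neg (fun hcc => hcnd (hiff.1 hcc)), if_neg hcnd, mul_zero]
    rw [Finset.sum_congr rfl (fun σ _ => hstep σ), hentry i (e.symm h)]
    rw [hM]
    simp
  refine ⟨π, ⟨fun m => hw0 _, ?_⟩, ?_, ?_⟩
  · -- total mass one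
    rw [hEquiv π, Finset.sum_congr rfl (fun σ _ => hπe σ), hw1]
  · -- ClusterPIIF
    intro i j hcij
    intro h
    -- translate indicator sums to filtered sums
    have htrans : ∀ q : H → ℝ,
        (∑ h' : H, Set.indicator {z : H | dpref i z h ∨ z = h} q h')
          = ∑ h' ∈ univ.filter (fun h' => rd i h' ≤ rd i h), q h' := by
      intro q
      have hmemiff : ∀ h' : H, h' ∈ {z : H | dpref i z h ∨ z = h} ↔ rd i h' ≤ rd i h := by
        intro h'
        simp only [Set.mem_setOf_eq]
        constructor
        · rintro (hd | rfl)
          · exact le_of_lt ((hdiff i h' h).1 hd)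
          · exact le_rfl
        · intro hle
          rcases lt_or_eq_of_le hle with hlt | heq
          · exact Or.inl ((hdiff i h' h).2 hlt)
          · exact Or.inr (hinj i heq)
      have h1 : ∀ h' : H, Set.indicator {z : H | dpref i z h ∨ z = h} q h'
          = if rd i h' ≤ rd i h then q h' else 0 := by
        intro h'
        rw [Set.indicator_apply]
        by_cases hcnd : rd i h' ≤ rd i h
        · rw [if_pos hcnd, if_pos ((hmemiff h').2 hcnd)]
        · rw [if_neg hcnd, if_neg (fun hmem => hcnd ((hmemiff h').1 hmem))]
      calc (∑ h' : H, Set.indicator {z : H | dpref i z h ∨ z = h} q h')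
          = ∑ h' : H, (if rd i h' ≤ rd i h then q h' else 0) :=
            Finset.sum_congr rfl (fun h' _ => h1 h')
        _ = ∑ h' ∈ univ.filter (fun h' => rd i h' ≤ rd i h), q h' :=
            (Finset.sum_filter _ _).symm
    rw [htrans (prospect π j), htrans (prospect π i)]
    rw [Finset.sum_congr rfl (fun h' _ => hprospect j h'),
      Finset.sum_congr rfl (fun h' _ => hprospect i h')]
    exact xalloc_fair c rd rh hcij (rd i h)
  · -- stability
    have hzero : ∀ m : D ≃ H,
        Set.indicator
          {m : D ≃ H | ∃ (i : D) (h : H),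
            m i ≠ h ∧ dpref i h (m i) ∧ hpref h (c i) (c (m.symm h))} π m = 0 := by
      intro m
      rw [Set.indicator_apply]
      split
      case isTrue hmem =>
        -- if m were in the support, it would be stable; so π m = 0
        by_contra hπm
        have hπpos : 0 < π m := lt_of_le_of_ne (hw0 _) (Ne.symm hπm)
        have hsupp : ∀ i, 0 < x i (m i) := by
          intro i
          have hone : M i ((m.trans e.symm) i) = x i (m i) := by
            rw [hM]
            simp [Equiv.trans_apply]
          have hge : w (m.trans e.symm) ≤ M i ((m.trans e.symm) i) := by
            rw [← hentry i ((m.trans e.symm) i)]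
            have := Finset.single_le_sum
              (f := fun σ : Equiv.Perm D => w σ * (if σ i = (m.trans e.symm) i then 1 else 0))
              (fun σ _ => mul_nonneg (hw0 σ) (by split <;> norm_num)) (Finset.mem_univ (m.trans e.symm))
            simpa using this
          rw [hone] at hge
          exact lt_of_lt_of_le hπpos hge
        obtain ⟨i, h, hne, hdp, hhp⟩ := hmem
        exact support_stable c rd rh hinj m hsupp
          ⟨i, h, hne, (hdiff i h (m i)).1 hdp, (hhiff h (c i) (c (m.symm h))).1 hhp⟩
      case isFalse => rfl
    rw [Finset.sum_congr rfl (fun m _ => hzero m), Finset.sum_const_zero]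
    exact le_of_lt hτ
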